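/- Let n ≥ 3 and let s₁, …, s_n be closed line segments in ℝ². Then the set of transversal lines in ℝ² to s₁, …, s_n has at most n connected components: there exist transversals T₁, …, T_m with m ≤ n such that every transversal lies in the same connected component of transversals as some T_j. -/

import Mathlib

open Set

noncomputable section

/-- The line in ℝ² through `a` with direction `v`. -/
def lineThrough2 (a v : ℝ × ℝ) : Set (ℝ × ℝ) :=
  {p | ∃ r : ℝ, p = a + r • v}

/-- `L` is a line in ℝ². -/
def IsLine2 (L : Set (ℝ × ℝ)) : Prop :=
  ∃ a v : ℝ × ℝ, v ≠ 0 ∧ L = lineThrough2 a v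

/-- `L` is a transversal to the family of sets `s` in ℝ²: a line meeting every `s i`. -/
def IsTransversal2 {n : ℕ} (s : Fin n → Set (ℝ × ℝ)) (L : Set (ℝ × ℝ)) : Prop :=
  IsLine2 L ∧ ∀ i, (L ∩ s i).Nonempty

/-- Two transversals `L₀`, `L₁` to the family `s` lie in the same connected component of
transversals: one can be moved continuously to the other while remaining a transversal. -/
def SameComp2 {n : ℕ} (s : Fin n → Set (ℝ × ℝ)) (L₀ L₁ : Set (ℝ × ℝ)) : Prop :=
  ∃ a v : ℝ → ℝ × ℝ,
    ContinuousOn a (Icc 0 1) ∧ ContinuousOn v (Icc 0 1) ∧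
    (∀ t ∈ Icc (0:ℝ) 1, v t ≠ 0) ∧
    (∀ t ∈ Icc (0:ℝ) 1, ∀ i, (lineThrough2 (a t) (v t) ∩ s i).Nonempty) ∧
    lineThrough2 (a 0) (v 0) = L₀ ∧ lineThrough2 (a 1) (v 1) = L₁

namespace Stmt15Aux

def dot2 (a b : ℝ × ℝ) : ℝ := a.1 * b.1 + a.2 * b.2

def nv (θ : ℝ) : ℝ × ℝ := (-Real.sin θ, Real.cos θ)

def uv (θ : ℝ) : ℝ × ℝ := (Real.cos θ, Real.sin θ)

def lineTC (θ c : ℝ) : Set (ℝ × ℝ) := lineThrough2 (c • nv θ) (uv θ)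

lemma uv_ne_zero (θ : ℝ) : uv θ ≠ 0 := by
  intro h
  have h1 : Real.cos θ = 0 := congrArg Prod.fst h
  have h2 : Real.sin θ = 0 := congrArg Prod.snd h
  nlinarith [Real.sin_sq_add_cos_sq θ]

lemma decomp (p : ℝ × ℝ) (θ : ℝ) :
    dot2 p (uv θ) • uv θ + dot2 p (nv θ) • nv θ = p := by
  have h := Real.sin_sq_add_cos_sq θ
  apply Prod.ext
  · simp only [Prod.fst_add, Prod.smul_fst, smul_eq_mul, uv, nv, dot2]
    linear_combination p.1 * h
  · simp only [Prod.snd_add, Prod.smul_snd, smul_eq_mul, uv, nv, dot2]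
    linear_combination p.2 * h

lemma dot2_comb (c r : ℝ) (u n b : ℝ × ℝ) :
    dot2 (c • n + r • u) b = c * dot2 n b + r * dot2 u b := by
  simp [dot2, smul_eq_mul]; ring

lemma dot2_comb' (a : ℝ × ℝ) (r : ℝ) (v b : ℝ × ℝ) :
    dot2 (a + r • v) b = dot2 a b + r * dot2 v b := by
  simp [dot2, smul_eq_mul]; ring

lemma dot2_nv_nv (θ : ℝ) : dot2 (nv θ) (nv θ) = 1 := by
  have h := Real.sin_sq_add_cos_sq θ
  simp only [dot2, nv]
  linear_combination h

lemma dot2_uv_nv (θ : ℝ) : dot2 (uv θ) (nv θ) = 0 := by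
  simp only [dot2, uv, nv]; ring

lemma mem_lineTC {p : ℝ × ℝ} {θ c : ℝ} : p ∈ lineTC θ c ↔ dot2 p (nv θ) = c := by
  constructor
  · rintro ⟨r, rfl⟩
    rw [dot2_comb, dot2_nv_nv, dot2_uv_nv]; ring
  · intro h
    refine ⟨dot2 p (uv θ), ?_⟩
    conv_lhs => rw [← decomp p θ]
    rw [h, add_comm]

lemma isLine_lineTC (θ c : ℝ) : ∃ a v : ℝ × ℝ, v ≠ 0 ∧ lineTC θ c = lineThrough2 a v :=
  ⟨c • nv θ, uv θ, uv_ne_zero θ, rfl⟩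

/-- Any line whose direction is orthogonal to `nv θ` is `lineTC θ _`. -/
lemma lineThrough_eq_lineTC {a v : ℝ × ℝ} {θ : ℝ} (hv : v ≠ 0) (h : dot2 v (nv θ) = 0) :
    lineThrough2 a v = lineTC θ (dot2 a (nv θ)) := by
  have hvu : dot2 v (uv θ) ≠ 0 := by
    intro h0
    apply hv
    rw [← decomp v θ, h, h0]
    simp
  ext p
  constructor
  · rintro ⟨r, rfl⟩
    rw [mem_lineTC, dot2_comb', h]; ring
  · intro hp
    rw [mem_lineTC] at hp
    have hv' : v = dot2 v (uv θ) • uv θ := by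
      conv_lhs => rw [← decomp v θ, h]
      simp
    refine ⟨(dot2 p (uv θ) - dot2 a (uv θ)) / dot2 v (uv θ), ?_⟩
    have hv2 : ((dot2 p (uv θ) - dot2 a (uv θ)) / dot2 v (uv θ)) • v
        = (dot2 p (uv θ) - dot2 a (uv θ)) • uv θ := by
      nth_rewrite 2 [hv']
      rw [smul_smul, div_mul_cancel₀ _ hvu]
    rw [hv2]
    have hpyth := Real.sin_sq_add_cos_sq θ
    simp only [dot2, uv, nv] at hp ⊢
    apply Prod.ext
    · simp only [Prod.fst_add, Prod.smul_fst, smul_eq_mul]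
      linear_combination (-Real.sin θ) * hp + (a.1 - p.1) * hpyth
    · simp only [Prod.snd_add, Prod.smul_snd, smul_eq_mul]
      linear_combination (Real.cos θ) * hp + (a.2 - p.2) * hpyth



lemma cont_dotnv (d : ℝ × ℝ) : Continuous fun θ => dot2 d (nv θ) := by
  simp only [dot2, nv]
  continuity

lemma nv_add_pi (θ : ℝ) : nv (θ + Real.pi) = -nv θ := by
  simp [nv, Real.sin_add, Real.cos_add]

/-- In every half-open window of length π there is an angle whose normal is orthogonal
to a given vector. -/
lemma exists_angle (d : ℝ × ℝ) (w : ℝ) :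
    ∃ θ ∈ Ico w (w + Real.pi), dot2 d (nv θ) = 0 := by
  have hpi := Real.pi_pos
  have hflip : dot2 d (nv (w + Real.pi)) = -dot2 d (nv w) := by
    rw [nv_add_pi]; simp [dot2]; ring
  rcases lt_trichotomy (dot2 d (nv w)) 0 with h0 | h0 | h0
  · have : (0:ℝ) ∈ Ioo (dot2 d (nv w)) (dot2 d (nv (w + Real.pi))) := by
      constructor
      · exact h0
      · rw [hflip]; linarith
    have := intermediate_value_Ioo (by linarith : w ≤ w + Real.pi)
      ((cont_dotnv d).continuousOn) this
    obtain ⟨θ, hθ, hθ0⟩ := this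
    exact ⟨θ, ⟨le_of_lt hθ.1, hθ.2⟩, hθ0⟩
  · exact ⟨w, ⟨le_refl _, by linarith⟩, h0⟩
  · have : (0:ℝ) ∈ Ioo (dot2 d (nv (w + Real.pi))) (dot2 d (nv w)) := by
      constructor
      · rw [hflip]; linarith
      · exact h0
    have := intermediate_value_Ioo' (by linarith : w ≤ w + Real.pi)
      ((cont_dotnv d).continuousOn) this
    obtain ⟨θ, hθ, hθ0⟩ := this
    exact ⟨θ, ⟨le_of_lt hθ.1, hθ.2⟩, hθ0⟩

lemma dot2_uv_nv' (θ θ' : ℝ) : dot2 (uv θ) (nv θ') = Real.sin (θ - θ') := by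
  simp only [dot2, uv, nv, Real.sin_sub]
  ring

/-- Two orthogonality angles for the same nonzero vector differ by a multiple of π. -/
lemma angle_eq {d : ℝ × ℝ} {θ θ' : ℝ} (hd : d ≠ 0)
    (h : dot2 d (nv θ) = 0) (h' : dot2 d (nv θ') = 0) (hlt : |θ' - θ| < Real.pi) : θ' = θ := by
  have hdu : dot2 d (uv θ) ≠ 0 := by
    intro h0
    apply hd
    rw [← decomp d θ, h, h0]
    simp
  have hd' : d = dot2 d (uv θ) • uv θ := by
    conv_lhs => rw [← decomp d θ, h]
    simp
  have hs : Real.sin (θ - θ') = 0 := by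
    have : dot2 d (nv θ') = dot2 d (uv θ) * Real.sin (θ - θ') := by
      conv_lhs => rw [hd']
      rw [← dot2_uv_nv' θ θ']
      simp [dot2]; ring
    rw [h'] at this
    rcases mul_eq_zero.mp this.symm with h1 | h1
    · exact absurd h1 hdu
    · exact h1
  rw [Real.sin_eq_zero_iff] at hs
  obtain ⟨k, hk⟩ := hs
  have : |(k:ℝ)| * Real.pi < Real.pi := by
    rw [abs_sub_comm] at hlt
    calc |(k:ℝ)| * Real.pi = |(k:ℝ) * Real.pi| := by
            rw [abs_mul, abs_of_pos Real.pi_pos]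
      _ = |θ - θ'| := by rw [hk]
      _ < Real.pi := hlt
  have hk0 : (k:ℤ) = 0 := by
    by_contra hk0
    have : (1:ℝ) ≤ |(k:ℝ)| := by
      rw [← Int.cast_abs]
      exact_mod_cast Int.one_le_abs hk0
    nlinarith [Real.pi_pos]
  rw [hk0] at hk
  simp at hk
  linarith

/-- The sine convex-combination inequality. -/
lemma nv_combination {θ₁ θ₂ θ₃ : ℝ} (h12 : θ₁ ≤ θ₂) (h23 : θ₂ ≤ θ₃)
    (h31 : θ₃ - θ₁ < Real.pi) (d : ℝ × ℝ)
    (h1 : dot2 d (nv θ₁) ≤ 0) (h3 : dot2 d (nv θ₃) ≤ 0) : dot2 d (nv θ₂) ≤ 0 := by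
  rcases eq_or_lt_of_le h12 with rfl | h12'
  · exact h1
  rcases eq_or_lt_of_le h23 with rfl | h23'
  · exact h3
  have key : Real.sin (θ₃ - θ₁) * dot2 d (nv θ₂)
      = Real.sin (θ₃ - θ₂) * dot2 d (nv θ₁) + Real.sin (θ₂ - θ₁) * dot2 d (nv θ₃) := by
    simp only [dot2, nv, Real.sin_sub]
    ring
  have s12 : 0 < Real.sin (θ₂ - θ₁) :=
    Real.sin_pos_of_pos_of_lt_pi (by linarith) (by linarith)
  have s23 : 0 < Real.sin (θ₃ - θ₂) :=
    Real.sin_pos_of_pos_of_lt_pi (by linarith) (by linarith)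
  have s13 : 0 < Real.sin (θ₃ - θ₁) :=
    Real.sin_pos_of_pos_of_lt_pi (by linarith) (by linarith)
  nlinarith


/-- A line meets a closed segment iff its offset lies between the endpoint projections. -/
lemma stab_iff {θ c : ℝ} (X Y : ℝ × ℝ) :
    (lineTC θ c ∩ segment ℝ X Y).Nonempty ↔
      min (dot2 X (nv θ)) (dot2 Y (nv θ)) ≤ c ∧ c ≤ max (dot2 X (nv θ)) (dot2 Y (nv θ)) := by
  set A := dot2 X (nv θ) with hA
  set B := dot2 Y (nv θ) with hB
  constructor
  · rintro ⟨p, hpl, hps⟩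
    rw [mem_lineTC] at hpl
    obtain ⟨a, b, ha, hb, hab, hp⟩ := hps
    have hdot : dot2 p (nv θ) = a * A + b * B := by
      rw [← hp, hA, hB]
      simp only [dot2, nv, Prod.fst_add, Prod.snd_add, Prod.smul_fst, Prod.smul_snd, smul_eq_mul]
      ring
    rw [hpl] at hdot
    constructor
    · have h1 : a * (A ⊓ B) ≤ a * A := mul_le_mul_of_nonneg_left (min_le_left _ _) ha
      have h2 : b * (A ⊓ B) ≤ b * B := mul_le_mul_of_nonneg_left (min_le_right _ _) hb
      have h3 : a * (A ⊓ B) + b * (A ⊓ B) = A ⊓ B := by rw [← add_mul, hab, one_mul]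
      linarith
    · have h1 : a * A ≤ a * (A ⊔ B) := mul_le_mul_of_nonneg_left (le_max_left _ _) ha
      have h2 : b * B ≤ b * (A ⊔ B) := mul_le_mul_of_nonneg_left (le_max_right _ _) hb
      have h3 : a * (A ⊔ B) + b * (A ⊔ B) = A ⊔ B := by rw [← add_mul, hab, one_mul]
      linarith
  · rintro ⟨hmin, hmax⟩
    by_cases hAB : A = B
    · have hcA : c = A := by
        rw [← hAB] at hmin hmax
        simp at hmin hmax
        linarith
      exact ⟨X, mem_lineTC.mpr (by rw [← hA, ← hcA]), left_mem_segment ℝ X Y⟩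
    · set t : ℝ := (c - A) / (B - A) with ht
      have htt : 0 ≤ t ∧ t ≤ 1 := by
        rcases lt_or_gt_of_ne hAB with h | h
        · have hm : A ≤ c := by rw [min_eq_left h.le] at hmin; exact hmin
          have hM : c ≤ B := by rw [max_eq_right h.le] at hmax; exact hmax
          constructor
          · exact div_nonneg (by linarith) (by linarith)
          · rw [ht, div_le_one (by linarith)]; linarith
        · have hm : B ≤ c := by rw [min_eq_right h.le] at hmin; exact hmin
          have hM : c ≤ A := by rw [max_eq_left h.le] at hmax; exact hmax
          constructor
          · rw [ht, div_nonneg_iff]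
            right
            exact ⟨by linarith, by linarith⟩
          · rw [ht, div_le_one_iff]
            right; right
            exact ⟨by linarith, by linarith⟩
      refine ⟨(1 - t) • X + t • Y, ?_, ⟨1 - t, t, by linarith [htt.2], htt.1, by ring, rfl⟩⟩
      rw [mem_lineTC]
      have hcomb : dot2 ((1 - t) • X + t • Y) (nv θ) = (1 - t) * A + t * B := by
        rw [hA, hB]
        simp only [dot2, nv, Prod.fst_add, Prod.snd_add, Prod.smul_fst, Prod.smul_snd, smul_eq_mul]
        ring
      rw [hcomb, ht]
      have hBA : B - A ≠ 0 := fun hz => hAB (by linarith [sub_eq_zero.mp hz])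
      field_simp
      ring


lemma cont_nv : Continuous nv := by unfold nv; continuity

lemma cont_uv : Continuous uv := by unfold uv; continuity

lemma cont_sup' {ι : Type*} (s : Finset ι) (hs : s.Nonempty) (f : ι → ℝ → ℝ)
    (hf : ∀ i, Continuous (f i)) : Continuous fun θ => s.sup' hs fun i => f i θ := by
  induction hs using Finset.Nonempty.cons_induction with
  | singleton a => simpa using hf a
  | cons a s h hs ih =>
      simp only [Finset.sup'_cons (H := hs)]
      exact (hf a).max ih

lemma cont_inf' {ι : Type*} (s : Finset ι) (hs : s.Nonempty) (f : ι → ℝ → ℝ)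
    (hf : ∀ i, Continuous (f i)) : Continuous fun θ => s.inf' hs fun i => f i θ := by
  induction hs using Finset.Nonempty.cons_induction with
  | singleton a => simpa using hf a
  | cons a s h hs ih =>
      simp only [Finset.inf'_cons (H := hs)]
      exact (hf a).min ih

section Family

variable {n : ℕ}

/-- Lower envelope of offsets of transversal lines with normal angle `θ`. -/
def FF (hn : 0 < n) (x y : Fin n → ℝ × ℝ) (θ : ℝ) : ℝ :=
  Finset.univ.sup' ⟨⟨0, hn⟩, Finset.mem_univ _⟩
    fun i => min (dot2 (x i) (nv θ)) (dot2 (y i) (nv θ))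

/-- Upper envelope of offsets of transversal lines with normal angle `θ`. -/
def GG (hn : 0 < n) (x y : Fin n → ℝ × ℝ) (θ : ℝ) : ℝ :=
  Finset.univ.inf' ⟨⟨0, hn⟩, Finset.mem_univ _⟩
    fun i => max (dot2 (x i) (nv θ)) (dot2 (y i) (nv θ))

variable (hn : 0 < n) (x y : Fin n → ℝ × ℝ)

lemma cont_FF : Continuous (FF hn x y) :=
  cont_sup' _ _ _ fun i => (cont_dotnv (x i)).min (cont_dotnv (y i))

lemma cont_GG : Continuous (GG hn x y) :=
  cont_inf' _ _ _ fun i => (cont_dotnv (x i)).max (cont_dotnv (y i))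

lemma FF_le_iff {θ c : ℝ} : FF hn x y θ ≤ c ↔
    ∀ i, min (dot2 (x i) (nv θ)) (dot2 (y i) (nv θ)) ≤ c := by
  unfold FF
  refine (Finset.sup'_le_iff _ _).trans ?_
  simp

lemma le_GG_iff {θ c : ℝ} : c ≤ GG hn x y θ ↔
    ∀ i, c ≤ max (dot2 (x i) (nv θ)) (dot2 (y i) (nv θ)) := by
  unfold GG
  refine (Finset.le_inf'_iff _ _).trans ?_
  simp

lemma lineTC_transversal {θ c : ℝ} (h1 : FF hn x y θ ≤ c) (h2 : c ≤ GG hn x y θ) :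
    IsTransversal2 (fun i => segment ℝ (x i) (y i)) (lineTC θ c) := by
  refine ⟨isLine_lineTC θ c, fun i => (stab_iff (x i) (y i)).mpr ⟨?_, ?_⟩⟩
  · exact le_trans (((FF_le_iff hn x y).mp (le_refl _)) i) h1
  · exact le_trans h2 (((le_GG_iff hn x y).mp (le_refl _)) i)

lemma transversal_angle {L : Set (ℝ × ℝ)}
    (hL : IsTransversal2 (fun i => segment ℝ (x i) (y i)) L) (w : ℝ) :
    ∃ θ ∈ Ico w (w + Real.pi), ∃ c, L = lineTC θ c ∧ FF hn x y θ ≤ c ∧ c ≤ GG hn x y θ := by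
  obtain ⟨⟨a, v, hv, rfl⟩, hmeet⟩ := hL
  obtain ⟨θ, hθw, hθ⟩ := exists_angle v w
  have hLeq := lineThrough_eq_lineTC (a := a) hv hθ
  refine ⟨θ, hθw, dot2 a (nv θ), hLeq, ?_, ?_⟩
  · rw [FF_le_iff]
    intro i
    have := hmeet i
    rw [hLeq] at this
    exact ((stab_iff (x i) (y i)).mp this).1
  · rw [le_GG_iff]
    intro i
    have := hmeet i
    rw [hLeq] at this
    exact ((stab_iff (x i) (y i)).mp this).2

/-- The key path construction: if all angles between `θ₁` and `θ₂` are feasible, the two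
transversals are in the same component. -/
lemma sameComp_of_feasible {θ₁ θ₂ c₁ c₂ : ℝ}
    (hfeas : ∀ ϑ, min θ₁ θ₂ ≤ ϑ → ϑ ≤ max θ₁ θ₂ → FF hn x y ϑ ≤ GG hn x y ϑ)
    (h1 : FF hn x y θ₁ ≤ c₁) (h1' : c₁ ≤ GG hn x y θ₁)
    (h2 : FF hn x y θ₂ ≤ c₂) (h2' : c₂ ≤ GG hn x y θ₂) :
    SameComp2 (fun i => segment ℝ (x i) (y i)) (lineTC θ₁ c₁) (lineTC θ₂ c₂) := by
  set Θ : ℝ → ℝ := fun t => θ₁ + t * (θ₂ - θ₁) with hΘ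
  set lin : ℝ → ℝ := fun t => c₁ + t * (c₂ - c₁) with hlin
  set cc : ℝ → ℝ := fun t => max (FF hn x y (Θ t)) (min (GG hn x y (Θ t)) (lin t)) with hcc
  have hΘcont : Continuous Θ := by continuity
  have hlincont : Continuous lin := by continuity
  have hcccont : Continuous cc :=
    ((cont_FF hn x y).comp hΘcont).max (((cont_GG hn x y).comp hΘcont).min hlincont)
  have hΘmem : ∀ t ∈ Icc (0:ℝ) 1, min θ₁ θ₂ ≤ Θ t ∧ Θ t ≤ max θ₁ θ₂ := by
    intro t ⟨ht0, ht1⟩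
    simp only [hΘ]
    rcases le_total θ₁ θ₂ with h | h
    · rw [min_eq_left h, max_eq_right h]
      constructor <;> [nlinarith; nlinarith]
    · rw [min_eq_right h, max_eq_left h]
      constructor <;> [nlinarith; nlinarith]
  have hccmem : ∀ t ∈ Icc (0:ℝ) 1,
      FF hn x y (Θ t) ≤ cc t ∧ cc t ≤ GG hn x y (Θ t) := by
    intro t ht
    have hfg := hfeas (Θ t) (hΘmem t ht).1 (hΘmem t ht).2
    constructor
    · exact le_max_left _ _
    · apply max_le hfg
      exact min_le_left _ _
  have hΘ0 : Θ 0 = θ₁ := by simp [hΘ]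
  have hΘ1 : Θ 1 = θ₂ := by simp [hΘ]
  have hcc0 : cc 0 = c₁ := by
    have : lin 0 = c₁ := by simp [hlin]
    rw [hcc]
    simp only [hΘ0, this]
    rw [min_eq_right h1', max_eq_right h1]
  have hcc1 : cc 1 = c₂ := by
    have : lin 1 = c₂ := by simp [hlin]
    rw [hcc]
    simp only [hΘ1, this]
    rw [min_eq_right h2', max_eq_right h2]
  refine ⟨fun t => cc t • nv (Θ t), fun t => uv (Θ t), ?_, ?_, ?_, ?_, ?_, ?_⟩
  · exact (hcccont.smul (cont_nv.comp hΘcont)).continuousOn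
  · exact (cont_uv.comp hΘcont).continuousOn
  · exact fun t _ => uv_ne_zero (Θ t)
  · intro t ht i
    have hfg := hccmem t ht
    show (lineTC (Θ t) (cc t) ∩ segment ℝ (x i) (y i)).Nonempty
    apply (stab_iff (x i) (y i)).mpr
    constructor
    · exact le_trans (((FF_le_iff hn x y).mp (le_refl _)) i) hfg.1
    · exact le_trans hfg.2 (((le_GG_iff hn x y).mp (le_refl _)) i)
  · show lineTC (Θ 0) (cc 0) = lineTC θ₁ c₁
    rw [hΘ0, hcc0]
  · show lineTC (Θ 1) (cc 1) = lineTC θ₂ c₂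
    rw [hΘ1, hcc1]

end Family


theorem main_stmt15 (n : ℕ) (hn : 3 ≤ n) (x y : Fin n → ℝ × ℝ) :
    ∃ m : ℕ, m ≤ n ∧ ∃ T : Fin m → Set (ℝ × ℝ),
      (∀ j, IsTransversal2 (fun i => segment ℝ (x i) (y i)) (T j)) ∧
      ∀ L, IsTransversal2 (fun i => segment ℝ (x i) (y i)) L →
        ∃ j, SameComp2 (fun i => segment ℝ (x i) (y i)) L (T j) := by
  classical
  have hn0 : 0 < n := by omega
  have hpi := Real.pi_pos
  by_cases hex : ∃ L, IsTransversal2 (fun i => segment ℝ (x i) (y i)) L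
  swap
  · refine ⟨0, by omega, fun j => j.elim0, fun j => j.elim0, fun L hL => absurd ⟨L, hL⟩ hex⟩
  obtain ⟨L₀, hL₀⟩ := hex
  -- apex angles
  set apex : Fin n → ℝ := fun i => (exists_angle (x i - y i) 0).choose with hapex
  have hapexspec : ∀ i, apex i ∈ Ico (0:ℝ) (0 + Real.pi) ∧
      dot2 (x i - y i) (nv (apex i)) = 0 := by
    intro i
    obtain ⟨h1, h2⟩ := (exists_angle (x i - y i) 0).choose_spec
    exact ⟨h1, h2⟩
  set A : Finset ℝ := (Finset.univ.filter (fun i => x i ≠ y i)).image apex with hA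
  set B : Finset ℝ := if 2 ≤ A.card then A else A ∪ {0, Real.pi / 2} with hB
  have hAB : A ⊆ B := by
    rw [hB]
    split
    · exact Finset.Subset.refl _
    · exact Finset.subset_union_left
  have hBIco : ∀ b ∈ B, b ∈ Ico (0:ℝ) Real.pi := by
    intro b hb
    rw [hB] at hb
    have hmemA : ∀ a ∈ A, a ∈ Ico (0:ℝ) Real.pi := by
      intro a ha
      rw [hA] at ha
      obtain ⟨i, _, rfl⟩ := Finset.mem_image.mp ha
      have := (hapexspec i).1
      rwa [zero_add] at this
    split at hb
    · exact hmemA b hb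
    · rcases Finset.mem_union.mp hb with h | h
      · exact hmemA b h
      · simp only [Finset.mem_insert, Finset.mem_singleton] at h
        rcases h with rfl | rfl
        · exact ⟨le_refl _, hpi⟩
        · constructor <;> linarith
  have hBne : B.Nonempty := by
    rw [hB]
    split
    · rename_i h
      exact Finset.card_pos.mp (by omega)
    · exact ⟨0, Finset.mem_union.mpr (Or.inr (by simp))⟩
  have hBcard : B.card ≤ n := by
    have hAcard : A.card ≤ n := by
      calc A.card ≤ (Finset.univ.filter (fun i => x i ≠ y i)).card := Finset.card_image_le
        _ ≤ (Finset.univ : Finset (Fin n)).card := Finset.card_filter_le _ _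
        _ = n := Finset.card_fin n
    rw [hB]
    split
    · exact hAcard
    · rename_i h
      calc (A ∪ {0, Real.pi / 2}).card ≤ A.card + ({0, Real.pi / 2} : Finset ℝ).card :=
            Finset.card_union_le _ _
        _ ≤ 1 + 2 := by
            have h2 : ({0, Real.pi / 2} : Finset ℝ).card ≤ 2 :=
              Finset.card_insert_le _ _ |>.trans (by simp)
            omega
        _ ≤ n := by omega
  have hB2 : 2 ≤ B.card := by
    rw [hB]
    split
    · assumption
    · have hsub : ({0, Real.pi / 2} : Finset ℝ) ⊆ A ∪ {0, Real.pi / 2} :=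
        Finset.subset_union_right
      have hcard2 : ({0, Real.pi / 2} : Finset ℝ).card = 2 := by
        rw [Finset.card_insert_of_notMem (by simp; linarith), Finset.card_singleton]
      calc 2 = ({0, Real.pi / 2} : Finset ℝ).card := hcard2.symm
        _ ≤ _ := Finset.card_le_card hsub
  set w : ℝ := B.min' hBne with hw
  have hwB : w ∈ B := B.min'_mem hBne
  have hw0 : 0 ≤ w := (hBIco w hwB).1
  have hwmin : ∀ b ∈ B, w ≤ b := fun b hb => B.min'_le b hb
  -- completeness of apexes
  have hcomplete : ∀ z, w < z → z < w + Real.pi → ∀ i, x i ≠ y i →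
      dot2 (x i - y i) (nv z) = 0 → z ∈ B := by
    intro z hz1 hz2 i hi hzero
    have hd : x i - y i ≠ 0 := sub_ne_zero.mpr hi
    have ha := hapexspec i
    have haB : apex i ∈ B := hAB (Finset.mem_image.mpr ⟨i, Finset.mem_filter.mpr
      ⟨Finset.mem_univ i, hi⟩, rfl⟩)
    have habs : |z - apex i| < Real.pi := by
      rw [abs_lt]
      have h1 := (hBIco _ haB).1
      have h2 := (hBIco _ haB).2
      have h3 := hwmin _ haB
      constructor <;> linarith
    have := angle_eq hd ha.2 hzero habs
    rwa [this]
  -- the "next cut" function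
  set nxt : ℝ → ℝ := fun b =>
    if h : ((B.filter (fun a => b < a)).Nonempty) then (B.filter (fun a => b < a)).min' h
    else w + Real.pi with hnxt
  have hnxt_gt : ∀ b ∈ B, b < nxt b := by
    intro b hb
    simp only [hnxt]
    split
    · rename_i h
      have := Finset.min'_mem _ h
      exact (Finset.mem_filter.mp this).2
    · have := (hBIco b hb).2
      linarith [hwmin b hb, hw0]
  have hnxt_le : ∀ b ∈ B, nxt b ≤ w + Real.pi := by
    intro b hb
    simp only [hnxt]
    split
    · rename_i h
      have hmem := Finset.min'_mem _ h
      have := (hBIco _ (Finset.mem_filter.mp hmem).1).2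
      linarith [hw0]
    · exact le_refl _
  have hnxt_gap : ∀ b ∈ B, ∀ z ∈ B, ¬ (b < z ∧ z < nxt b) := by
    intro b hb z hz ⟨h1, h2⟩
    have hzf : z ∈ B.filter (fun a => b < a) := Finset.mem_filter.mpr ⟨hz, h1⟩
    simp only [hnxt] at h2
    rw [dif_pos ⟨z, hzf⟩] at h2
    exact absurd (Finset.min'_le _ z hzf) (not_le.mpr h2)
  have hnxt_len : ∀ b ∈ B, nxt b - b < Real.pi := by
    intro b hb
    simp only [hnxt]
    split
    · rename_i h
      have hmem := Finset.min'_mem _ h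
      have h1 := (hBIco _ (Finset.mem_filter.mp hmem).1).2
      have h2 := (hBIco b hb).1
      linarith
    · rename_i h
      -- filter is empty, so b is the max; since card ≥ 2, b > w
      have hbw : w < b := by
        rcases eq_or_lt_of_le (hwmin b hb) with heq | hlt
        · exfalso
          have hmax := B.max'_mem hBne
          have hminmax : w < B.max' hBne := by
            rw [hw]
            exact Finset.min'_lt_max'_of_card _ (by omega)
          apply h
          exact ⟨B.max' hBne, Finset.mem_filter.mpr ⟨hmax, by rw [← heq]; exact hminmax⟩⟩
        · exact hlt
      linarith
  -- interval convexity of feasibility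
  have hconv : ∀ b ∈ B, ∀ θ₁ θ₂ θ₃ : ℝ, b ≤ θ₁ → θ₃ ≤ nxt b → θ₁ ≤ θ₂ → θ₂ ≤ θ₃ →
      FF hn0 x y θ₁ ≤ GG hn0 x y θ₁ → FF hn0 x y θ₃ ≤ GG hn0 x y θ₃ →
      FF hn0 x y θ₂ ≤ GG hn0 x y θ₂ := by
    intro b hb θ₁ θ₂ θ₃ hbθ hθn h12 h23 hf1 hf3
    -- choose an endpoint assignment valid on [b, nxt b]
    have hassign : ∀ i : Fin n, ∃ p q : ℝ × ℝ, ∀ θ, b ≤ θ → θ ≤ nxt b →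
        min (dot2 (x i) (nv θ)) (dot2 (y i) (nv θ)) = dot2 p (nv θ) ∧
        max (dot2 (x i) (nv θ)) (dot2 (y i) (nv θ)) = dot2 q (nv θ) := by
      intro i
      by_cases hxy : x i = y i
      · exact ⟨x i, x i, fun θ _ _ => by rw [← hxy]; simp⟩
      · have hd : x i - y i ≠ 0 := sub_ne_zero.mpr hxy
        have hdsub : ∀ θ, dot2 (x i - y i) (nv θ)
            = dot2 (x i) (nv θ) - dot2 (y i) (nv θ) := by
          intro θ
          simp [dot2, Prod.fst_sub, Prod.snd_sub]
          ring
        have hnozero : ∀ z, b < z → z < nxt b → dot2 (x i - y i) (nv z) ≠ 0 := by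
          intro z h1 h2 h0
          have hzB := hcomplete z (lt_of_le_of_lt (hwmin b hb) h1)
            (lt_of_lt_of_le h2 (hnxt_le b hb)) i hxy h0
          exact hnxt_gap b hb z hzB ⟨h1, h2⟩
        have hsign : (∀ θ, b ≤ θ → θ ≤ nxt b → dot2 (x i - y i) (nv θ) ≤ 0) ∨
            (∀ θ, b ≤ θ → θ ≤ nxt b → 0 ≤ dot2 (x i - y i) (nv θ)) := by
          by_contra hcon
          push_neg at hcon
          obtain ⟨⟨θa, ha1, ha2, ha3⟩, ⟨θb', hb1, hb2, hb3⟩⟩ := hcon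
          rcases lt_trichotomy θa θb' with hod | hod | hod
          · obtain ⟨z, hz, hz0⟩ := intermediate_value_Ioo' (le_of_lt hod)
              ((cont_dotnv _).continuousOn) (⟨hb3, ha3⟩ : (0:ℝ) ∈ Ioo _ _)
            exact hnozero z (lt_of_le_of_lt ha1 hz.1) (lt_of_lt_of_le hz.2 hb2) hz0
          · rw [hod] at ha3; linarith
          · obtain ⟨z, hz, hz0⟩ := intermediate_value_Ioo (le_of_lt hod)
              ((cont_dotnv _).continuousOn) (⟨hb3, ha3⟩ : (0:ℝ) ∈ Ioo _ _)
            exact hnozero z (lt_of_le_of_lt hb1 hz.1) (lt_of_lt_of_le hz.2 ha2) hz0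
        rcases hsign with hs | hs
        · refine ⟨x i, y i, fun θ hθ1 hθ2 => ?_⟩
          have := hs θ hθ1 hθ2
          rw [hdsub] at this
          exact ⟨min_eq_left (by linarith), max_eq_right (by linarith)⟩
        · refine ⟨y i, x i, fun θ hθ1 hθ2 => ?_⟩
          have := hs θ hθ1 hθ2
          rw [hdsub] at this
          exact ⟨min_eq_right (by linarith), max_eq_left (by linarith)⟩
    choose pp qq hpq using hassign
    -- characterization of feasibility on the interval
    have hchar : ∀ θ, b ≤ θ → θ ≤ nxt b →
        (FF hn0 x y θ ≤ GG hn0 x y θ ↔ ∀ i j, dot2 (pp i - qq j) (nv θ) ≤ 0) := by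
      intro θ hθ1 hθ2
      have hsubd : ∀ (u v : ℝ × ℝ) θ', dot2 (u - v) (nv θ')
          = dot2 u (nv θ') - dot2 v (nv θ') := by
        intro u v θ'
        simp [dot2, Prod.fst_sub, Prod.snd_sub]
        ring
      constructor
      · intro hfg i j
        have h1 := ((FF_le_iff hn0 x y).mp hfg) i
        have h2 := ((le_GG_iff hn0 x y).mp (le_refl (GG hn0 x y θ))) j
        have h3 := le_trans h1 h2
        rw [(hpq i θ hθ1 hθ2).1, (hpq j θ hθ1 hθ2).2] at h3
        rw [hsubd]
        linarith
      · intro hij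
        rw [FF_le_iff]
        intro i
        rw [le_GG_iff]
        intro j
        have := hij i j
        rw [hsubd] at this
        rw [(hpq i θ hθ1 hθ2).1, (hpq j θ hθ1 hθ2).2]
        linarith
    rw [hchar θ₂ (by linarith) (by linarith)]
    intro i j
    have h1 := (hchar θ₁ (by linarith) (by linarith)).mp hf1 i j
    have h3 := (hchar θ₃ (by linarith) (by linarith)).mp hf3 i j
    exact nv_combination h12 h23 (by linarith [hnxt_len b hb]) _ h1 h3
  -- representatives
  set Tb : ℝ → Set (ℝ × ℝ) := fun b =>
    if h : ∃ ϑ, b ≤ ϑ ∧ ϑ ≤ nxt b ∧ FF hn0 x y ϑ ≤ GG hn0 x y ϑ then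
      lineTC h.choose (FF hn0 x y h.choose)
    else L₀ with hTb
  have hTbtrans : ∀ b, IsTransversal2 (fun i => segment ℝ (x i) (y i)) (Tb b) := by
    intro b
    simp only [hTb]
    split
    · rename_i h
      exact lineTC_transversal hn0 x y (le_refl _) h.choose_spec.2.2
    · exact hL₀
  refine ⟨B.card, hBcard, fun j => Tb ((B.equivFin.symm j : {z // z ∈ B}) : ℝ),
    fun j => hTbtrans _, ?_⟩
  intro L hL
  obtain ⟨θ, hθIco, c, hLeq, hFc, hcG⟩ := transversal_angle hn0 x y hL w
  have hwθ : w ≤ θ := hθIco.1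
  have hθw : θ < w + Real.pi := hθIco.2
  set b : ℝ := (B.filter (fun a => a ≤ θ)).max' ⟨w, Finset.mem_filter.mpr ⟨hwB, hwθ⟩⟩ with hb
  have hbmem : b ∈ B.filter (fun a => a ≤ θ) := Finset.max'_mem _ _
  have hbB : b ∈ B := (Finset.mem_filter.mp hbmem).1
  have hbθ : b ≤ θ := (Finset.mem_filter.mp hbmem).2
  have hθnxt : θ ≤ nxt b := by
    simp only [hnxt]
    split
    · rename_i h
      have hmin := Finset.min'_mem _ h
      obtain ⟨hminB, hminb⟩ := Finset.mem_filter.mp hmin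
      by_contra hcon
      push_neg at hcon
      have : (B.filter (fun a => b < a)).min' h ∈ B.filter (fun a => a ≤ θ) :=
        Finset.mem_filter.mpr ⟨hminB, le_of_lt hcon⟩
      have := Finset.le_max' _ _ this
      rw [← hb] at this
      linarith
    · linarith
  have hexf : ∃ ϑ, b ≤ ϑ ∧ ϑ ≤ nxt b ∧ FF hn0 x y ϑ ≤ GG hn0 x y ϑ :=
    ⟨θ, hbθ, hθnxt, le_trans hFc hcG⟩
  refine ⟨B.equivFin ⟨b, hbB⟩, ?_⟩
  have hTbeq : Tb ((B.equivFin.symm (B.equivFin ⟨b, hbB⟩) : {z // z ∈ B}) : ℝ) = Tb b := by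
    rw [Equiv.symm_apply_apply]
  show SameComp2 (fun i => segment ℝ (x i) (y i)) L
    (Tb ((B.equivFin.symm (B.equivFin ⟨b, hbB⟩) : {z // z ∈ B}) : ℝ))
  rw [hTbeq, hLeq]
  simp only [hTb]
  rw [dif_pos hexf]
  set ρ : ℝ := hexf.choose with hρ
  obtain ⟨hρ1, hρ2, hρ3⟩ := hexf.choose_spec
  apply sameComp_of_feasible hn0 x y _ hFc hcG (le_refl _) hρ3
  intro ϑ hϑ1 hϑ2
  have hminmem : min θ ρ = θ ∨ min θ ρ = ρ := min_cases θ ρ |>.imp (fun h => h.1) (fun h => h.1)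
  have hmaxmem : max θ ρ = θ ∨ max θ ρ = ρ := max_cases θ ρ |>.imp (fun h => h.1) (fun h => h.1)
  have hminf : FF hn0 x y (min θ ρ) ≤ GG hn0 x y (min θ ρ) := by
    rcases hminmem with h | h <;> rw [h]
    · exact le_trans hFc hcG
    · exact hρ3
  have hmaxf : FF hn0 x y (max θ ρ) ≤ GG hn0 x y (max θ ρ) := by
    rcases hmaxmem with h | h <;> rw [h]
    · exact le_trans hFc hcG
    · exact hρ3
  have hminb : b ≤ min θ ρ := le_min hbθ hρ1
  have hmaxn : max θ ρ ≤ nxt b := max_le hθnxt hρ2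
  exact hconv b hbB (min θ ρ) ϑ (max θ ρ) hminb hmaxn hϑ1 hϑ2 hminf hmaxf

end Stmt15Aux

/-- the set of transversal lines in ℝ² to `n ≥ 3` segments has at most `n`
connected components. -/
theorem stmt_15 (n : ℕ) (hn : 3 ≤ n) (x y : Fin n → ℝ × ℝ) :
    ∃ m : ℕ, m ≤ n ∧ ∃ T : Fin m → Set (ℝ × ℝ),
      (∀ j, IsTransversal2 (fun i => segment ℝ (x i) (y i)) (T j)) ∧
      ∀ L, IsTransversal2 (fun i => segment ℝ (x i) (y i)) L →
        ∃ j, SameComp2 (fun i => segment ℝ (x i) (y i)) L (T j) := by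
  exact Stmt15Aux.main_stmt15 n hn x y
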